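/- (Key convergence lemma for AdaSub) Fix j ∈ {1,...,p}. If the conditional selection success probabilities p_j^{(t)} = P(W_j^{(t)} = 1 | Z_j^{(t)} = 1, ℱ^{(t-1)}) converge almost surely to a random variable p_j* as t → ∞, then the AdaSub selection probabilities r_j^{(t)} = (q + K ∑_{i≤t} W_j^{(i)}) / (p + K ∑_{i≤t} Z_j^{(i)}) also converge almost surely to p_j* as t → ∞. -/

import Mathlib

open MeasureTheory Filter

private lemma abs_le_one_add_sq (x : ℝ) : |x| ≤ 1 + x ^ 2 := by
  rcases abs_cases x with ⟨h, _⟩ | ⟨h, _⟩ <;> nlinarith [sq_nonneg (x - 1), sq_nonneg (x + 1)]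

/-- Deterministic core lemma: a sequence satisfying the stochastic-approximation-type
recursion with weights coming from a positive nondecreasing sequence `D` tending to
infinity, inputs `pseq` tending to `pstar`, and a convergent perturbation `m`,
converges to `pstar`. -/
lemma adaSub_det_tendsto (r pseq m D : ℕ → ℝ) (pstar : ℝ)
    (hD0 : ∀ t, 0 < D t) (hDmono : ∀ t, D t ≤ D (t + 1))
    (hDtop : Tendsto D atTop atTop)
    (hrec : ∀ t, r (t + 1) =
      r t + (1 - D t / D (t + 1)) * (pseq (t + 1) - r t) + (m (t + 1) - m t))
    (hm : ∃ c, Tendsto m atTop (nhds c))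
    (hp : Tendsto pseq atTop (nhds pstar)) :
    Tendsto r atTop (nhds pstar) := by
  obtain ⟨c, hc⟩ := hm
  rw [Metric.tendsto_atTop] at hc hp ⊢
  intro ε hε
  obtain ⟨N1, hN1⟩ := hc (ε / 16) (by linarith)
  obtain ⟨N2, hN2⟩ := hp (ε / 8) (by linarith)
  set N := max N1 N2 with hNdef
  have hmN : ∀ n, N ≤ n → |m n - m N| ≤ ε / 8 := by
    intro n hn
    have h1 := hN1 n (le_trans (le_max_left _ _) hn)
    have h2 := hN1 N (le_max_left _ _)
    rw [Real.dist_eq] at h1 h2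
    have : m n - m N = (m n - c) - (m N - c) := by ring
    rw [this]
    calc |(m n - c) - (m N - c)| ≤ |m n - c| + |m N - c| := abs_sub _ _
      _ ≤ ε / 8 := by linarith
  have hpN : ∀ n, N ≤ n → |pseq n - pstar| ≤ ε / 8 := by
    intro n hn
    have := hN2 n (le_trans (le_max_right _ _) hn)
    rw [Real.dist_eq] at this
    linarith
  have key : ∀ n, N ≤ n →
      |r n - (m n - m N) - pstar| ≤ D N / D n * |r N - pstar| + 2 * (ε / 8) := by
    intro n hn
    induction n, hn using Nat.le_induction with
    | base =>
      have h1 : D N / D N = 1 := div_self (hD0 N).ne'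
      have h2 : r N - (m N - m N) - pstar = r N - pstar := by ring
      rw [h1, h2, one_mul]
      linarith
    | succ n hn ih =>
      have hb0 : 0 ≤ D n / D (n + 1) := div_nonneg (hD0 n).le (hD0 (n + 1)).le
      have hb1 : D n / D (n + 1) ≤ 1 := div_le_one_of_le₀ (hDmono n) (hD0 (n + 1)).le
      have heq : r (n + 1) - (m (n + 1) - m N) - pstar
          = (D n / D (n + 1)) * (r n - (m n - m N) - pstar)
            + (1 - D n / D (n + 1)) * ((pseq (n + 1) - pstar) - (m n - m N)) := by
        rw [hrec n]; ring
      have hx : |(pseq (n + 1) - pstar) - (m n - m N)| ≤ 2 * (ε / 8) := by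
        calc |(pseq (n + 1) - pstar) - (m n - m N)|
            ≤ |pseq (n + 1) - pstar| + |m n - m N| := abs_sub _ _
          _ ≤ 2 * (ε / 8) := by
              have := hpN (n + 1) (le_trans hn (Nat.le_succ n))
              have := hmN n hn
              linarith
      have hDD : (D n / D (n + 1)) * (D N / D n) = D N / D (n + 1) := by
        rw [div_mul_div_comm, mul_comm (D (n + 1)) (D n), mul_div_mul_left _ _ (hD0 n).ne']
      calc |r (n + 1) - (m (n + 1) - m N) - pstar|
          ≤ (D n / D (n + 1)) * |r n - (m n - m N) - pstar|
            + (1 - D n / D (n + 1)) * |(pseq (n + 1) - pstar) - (m n - m N)| := by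
            rw [heq]
            refine le_trans (abs_add_le _ _) ?_
            rw [abs_mul, abs_mul, abs_of_nonneg hb0, abs_of_nonneg (by linarith : (0:ℝ) ≤ 1 - D n / D (n + 1))]
        _ ≤ D N / D (n + 1) * |r N - pstar| + 2 * (ε / 8) := by
            have t1 : D n / D (n + 1) * |r n - (m n - m N) - pstar|
                ≤ D N / D (n + 1) * |r N - pstar| + D n / D (n + 1) * (2 * (ε / 8)) := by
              calc D n / D (n + 1) * |r n - (m n - m N) - pstar|
                  ≤ D n / D (n + 1) * (D N / D n * |r N - pstar| + 2 * (ε / 8)) :=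
                    mul_le_mul_of_nonneg_left ih hb0
                _ = D N / D (n + 1) * |r N - pstar| + D n / D (n + 1) * (2 * (ε / 8)) := by
                    rw [mul_add, ← mul_assoc, hDD]
            have t2 : (1 - D n / D (n + 1)) * |pseq (n + 1) - pstar - (m n - m N)|
                ≤ (1 - D n / D (n + 1)) * (2 * (ε / 8)) :=
              mul_le_mul_of_nonneg_left hx (by linarith)
            nlinarith [t1, t2]
  obtain ⟨N3, hN3⟩ := eventually_atTop.1
    (hDtop.eventually_ge_atTop ((D N * |r N - pstar|) / (ε / 8)))
  refine ⟨max N N3, fun n hn => ?_⟩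
  have hnN : N ≤ n := le_trans (le_max_left _ _) hn
  have h1 := key n hnN
  have h2 := hmN n hnN
  have h3 : D N / D n * |r N - pstar| ≤ ε / 8 := by
    have hD := hN3 n (le_trans (le_max_right _ _) hn)
    rw [div_mul_eq_mul_div, div_le_iff₀ (hD0 n)]
    rw [div_le_iff₀ (by linarith : (0:ℝ) < ε / 8)] at hD
    nlinarith
  rw [Real.dist_eq]
  have : r n - pstar = (r n - (m n - m N) - pstar) + (m n - m N) := by ring
  rw [this]
  calc |(r n - (m n - m N) - pstar) + (m n - m N)|
      ≤ |r n - (m n - m N) - pstar| + |m n - m N| := abs_add_le _ _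
    _ < ε := by linarith

/-- Divergence of the harmonic-type series `∑ q / (p + K k)`. -/
lemma adaSub_harmonic_div (p K q : ℝ) (hp : 0 < p) (hK : 0 < K) (hq : 0 < q) :
    Tendsto (fun n => ∑ k ∈ Finset.range n, q / (p + K * k)) atTop atTop := by
  have hpos : ∀ k : ℕ, (0:ℝ) < p + K * k := fun k => by positivity
  rw [← not_summable_iff_tendsto_nat_atTop_of_nonneg
    (fun k => le_of_lt (div_pos hq (hpos k)))]
  intro hsum
  have h1 : Summable (fun k : ℕ => 1 / ((k : ℝ) + 1)) := by
    refine Summable.of_nonneg_of_le (fun k => by positivity) (fun k => ?_)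
      (hsum.mul_left ((p + K) / q))
    have hrw : (p + K) / q * (q / (p + K * (k : ℝ))) = (p + K) / (p + K * k) := by
      field_simp
    rw [hrw, div_le_div_iff₀ (by positivity) (hpos k)]
    have : (0:ℝ) ≤ (k : ℝ) := Nat.cast_nonneg k
    nlinarith
  have h2 : Summable (fun k : ℕ => 1 / (k : ℝ)) := by
    rw [← summable_nat_add_iff 1]
    convert h1 using 2 with k
    · rfl
    push_cast
    ring
  exact Real.not_summable_one_div_natCast h2

private lemma adaSub_algebra (q p K a b z w f : ℝ) (hA : 0 < p + K * a)
    (hB : 0 < p + K * (a + z)) :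
    (q + K * (b + w)) / (p + K * (a + z))
      = (q + K * b) / (p + K * a)
        + (1 - (p + K * a) / (p + K * (a + z))) * (f - (q + K * b) / (p + K * a))
        + K * (w - f * z) / (p + K * (a + z)) := by
  field_simp
  ring

/-- Key convergence lemma for AdaSub: Fix a variable index `j`. If the
conditional selection success probabilities `p^{(t)} = P(W^{(t)} = 1 | Z^{(t)} = 1, ℱ^{(t-1)})`
converge almost surely to a random variable `p*`, then the AdaSub selection probabilities
`r^{(t)} = (q + K ∑_{i≤t} W_i)/(p + K ∑_{i≤t} Z_i)` also converge almost surely to `p*`.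
Since `W ≤ Z` are `{0,1}`-valued, the conditional success probability is encoded by
`μ[W^{(t+1)} | ℱ_t] = p^{(t+1)} · μ[Z^{(t+1)} | ℱ_t] = p^{(t+1)} · r^{(t)}`. -/
theorem adaSub_key_convergence_lemma {Ω : Type*} {m0 : MeasurableSpace Ω}
    (μ : Measure Ω) [IsProbabilityMeasure μ] (ℱ : Filtration ℕ m0)
    (q p K : ℝ) (hq : 0 < q) (hqp : q < p) (hK : 0 < K)
    (Z W : ℕ → Ω → ℝ) (pf : ℕ → Ω → ℝ) (pstar : Ω → ℝ)
    (hZ01 : ∀ t ω, Z t ω = 0 ∨ Z t ω = 1)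
    (hW01 : ∀ t ω, W t ω = 0 ∨ W t ω = 1)
    (hWZ : ∀ t ω, W t ω ≤ Z t ω)
    (hZadapt : ∀ t, Measurable[ℱ t] (Z t))
    (hWadapt : ∀ t, Measurable[ℱ t] (W t))
    (hZcond : ∀ t : ℕ, (μ[Z (t + 1) | ℱ t]) =ᵐ[μ] fun ω =>
      (q + K * ∑ i ∈ Finset.Icc 1 t, W i ω) / (p + K * ∑ i ∈ Finset.Icc 1 t, Z i ω))
    (hp01 : ∀ t ω, 0 ≤ pf t ω ∧ pf t ω ≤ 1)
    (hpadapt : ∀ t, Measurable[ℱ t] (pf (t + 1)))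
    (hWcond : ∀ t : ℕ, (μ[W (t + 1) | ℱ t]) =ᵐ[μ] fun ω =>
      pf (t + 1) ω *
        ((q + K * ∑ i ∈ Finset.Icc 1 t, W i ω) / (p + K * ∑ i ∈ Finset.Icc 1 t, Z i ω)))
    (hptend : ∀ᵐ ω ∂μ, Tendsto (fun t => pf t ω) atTop (nhds (pstar ω))) :
    ∀ᵐ ω ∂μ, Tendsto
      (fun t => (q + K * ∑ i ∈ Finset.Icc 1 t, W i ω) /
        (p + K * ∑ i ∈ Finset.Icc 1 t, Z i ω)) atTop (nhds (pstar ω)) := by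
  classical
  have hp0 : (0:ℝ) < p := hq.trans hqp
  -- pointwise facts about Z, W
  have hZ0 : ∀ t ω, 0 ≤ Z t ω := fun t ω => by rcases hZ01 t ω with h | h <;> simp [h]
  have hZle : ∀ t ω, Z t ω ≤ 1 := fun t ω => by rcases hZ01 t ω with h | h <;> simp [h]
  have hW0 : ∀ t ω, 0 ≤ W t ω := fun t ω => by rcases hW01 t ω with h | h <;> simp [h]
  have hWle : ∀ t ω, W t ω ≤ 1 := fun t ω => by rcases hW01 t ω with h | h <;> simp [h]
  -- sums
  have hIcc : ∀ (X : ℕ → Ω → ℝ) (t : ℕ) (ω : Ω),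
      ∑ i ∈ Finset.Icc 1 (t + 1), X i ω = (∑ i ∈ Finset.Icc 1 t, X i ω) + X (t + 1) ω := by
    intro X t ω
    rw [← Finset.insert_Icc_right_eq_Icc_add_one (by omega : 1 ≤ t + 1),
      Finset.sum_insert (by simp)]
    ring
  have hS0 : ∀ t ω, 0 ≤ ∑ i ∈ Finset.Icc 1 t, Z i ω :=
    fun t ω => Finset.sum_nonneg fun i _ => hZ0 i ω
  have hT0 : ∀ t ω, 0 ≤ ∑ i ∈ Finset.Icc 1 t, W i ω :=
    fun t ω => Finset.sum_nonneg fun i _ => hW0 i ω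
  have hSle : ∀ t ω, ∑ i ∈ Finset.Icc 1 t, Z i ω ≤ t := by
    intro t ω
    calc ∑ i ∈ Finset.Icc 1 t, Z i ω ≤ ∑ i ∈ Finset.Icc 1 t, 1 :=
          Finset.sum_le_sum fun i _ => hZle i ω
      _ = t := by simp
  have hD0 : ∀ t ω, 0 < p + K * ∑ i ∈ Finset.Icc 1 t, Z i ω := by
    intro t ω
    have := hS0 t ω
    nlinarith
  have hDmono : ∀ t ω, p + K * ∑ i ∈ Finset.Icc 1 t, Z i ω
      ≤ p + K * ∑ i ∈ Finset.Icc 1 (t + 1), Z i ω := by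
    intro t ω
    rw [hIcc Z t ω]
    have := hZ0 (t + 1) ω
    nlinarith
  -- measurability
  have hSm : ∀ t, Measurable[ℱ t] fun ω => ∑ i ∈ Finset.Icc 1 t, Z i ω := fun t =>
    Finset.measurable_sum _ fun i hi =>
      (hZadapt i).mono (ℱ.mono (Finset.mem_Icc.1 hi).2) le_rfl
  have hTm : ∀ t, Measurable[ℱ t] fun ω => ∑ i ∈ Finset.Icc 1 t, W i ω := fun t =>
    Finset.measurable_sum _ fun i hi =>
      (hWadapt i).mono (ℱ.mono (Finset.mem_Icc.1 hi).2) le_rfl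
  -- integrability helper
  have hbint : ∀ (f : Ω → ℝ) (C : ℝ), Measurable f → (∀ ω, |f ω| ≤ C) → Integrable f μ := by
    intro f C hf hb
    exact (integrable_const C).mono' hf.aestronglyMeasurable
      (ae_of_all _ fun ω => by simpa [Real.norm_eq_abs] using hb ω)
  -- Step A : the denominators tend to infinity a.e.
  have hDtop : ∀ᵐ ω ∂μ, Tendsto (fun t => p + K * ∑ i ∈ Finset.Icc 1 t, Z i ω) atTop atTop := by
    set f : ℕ → Ω → ℝ := fun t ω => ∑ i ∈ Finset.Icc 1 t, Z i ω with hfdef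
    have hdiff : ∀ k : ℕ, f (k + 1) - f k = Z (k + 1) := by
      intro k
      funext ω
      simp only [Pi.sub_apply, hfdef]
      rw [hIcc Z k ω]
      ring
    have hfmono : ∀ᵐ ω ∂μ, ∀ n, f n ω ≤ f (n + 1) ω := by
      refine ae_of_all _ fun ω n => ?_
      simp only [hfdef]
      rw [hIcc Z n ω]
      have := hZ0 (n + 1) ω
      linarith
    have hfadapt : StronglyAdapted ℱ f := fun t => ((hSm t).stronglyMeasurable)
    have hfint : ∀ n, Integrable (f n) μ := by
      intro n
      refine hbint _ n ((hSm n).mono (ℱ.le n) le_rfl) fun ω => ?_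
      rw [abs_of_nonneg (hS0 n ω)]
      exact hSle n ω
    have hfbdd : ∀ᵐ ω ∂μ, ∀ n, |f (n + 1) ω - f n ω| ≤ ((1 : NNReal) : ℝ) := by
      refine ae_of_all _ fun ω n => ?_
      have : f (n + 1) ω - f n ω = Z (n + 1) ω := by
        have := congrFun (hdiff n) ω
        simpa using this
      rw [this, abs_of_nonneg (hZ0 (n + 1) ω)]
      simpa using hZle (n + 1) ω
    have hiff := tendsto_sum_indicator_atTop_iff hfmono hfadapt hfint hfbdd
    have hZae : ∀ᵐ ω ∂μ, ∀ k : ℕ, (μ[Z (k + 1) | ℱ k]) ω =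
        (q + K * ∑ i ∈ Finset.Icc 1 k, W i ω) / (p + K * ∑ i ∈ Finset.Icc 1 k, Z i ω) :=
      ae_all_iff.2 hZcond
    have hpred : ∀ᵐ ω ∂μ, Tendsto (fun n => predictablePart f ℱ μ n ω) atTop atTop := by
      filter_upwards [hZae] with ω hω
      refine tendsto_atTop_mono (fun n => ?_) (adaSub_harmonic_div p K q hp0 hK hq)
      have hterm : ∀ k : ℕ, q / (p + K * (k:ℝ)) ≤ (μ[f (k + 1) - f k | ℱ k]) ω := by
        intro k
        rw [hdiff k, hω k]
        have h1 : (0:ℝ) < p + K * (k:ℝ) := by positivity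
        have h2 := hD0 k ω
        have h3 : p + K * ∑ i ∈ Finset.Icc 1 k, Z i ω ≤ p + K * (k:ℝ) := by
          have := hSle k ω
          nlinarith
        have h4 : q ≤ q + K * ∑ i ∈ Finset.Icc 1 k, W i ω := by
          have := hT0 k ω
          nlinarith
        exact div_le_div₀ (by linarith) h4 h2 h3
      calc ∑ k ∈ Finset.range n, q / (p + K * (k:ℝ))
          ≤ ∑ k ∈ Finset.range n, (μ[f (k + 1) - f k | ℱ k]) ω :=
            Finset.sum_le_sum fun k _ => hterm k
        _ = predictablePart f ℱ μ n ω := by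
            simp [predictablePart, Finset.sum_apply]
    filter_upwards [hiff, hpred] with ω hω1 hω2
    have hftop : Tendsto (fun n => f n ω) atTop atTop := hω1.2 hω2
    have : Tendsto (fun n => K * f n ω) atTop atTop := hftop.const_mul_atTop hK
    simpa using tendsto_atTop_add_const_left atTop p this
  -- Step B : the martingale part
  set dM : ℕ → Ω → ℝ := fun t ω =>
    K / ((p + K * ∑ i ∈ Finset.Icc 1 t, Z i ω) + K) *
      (W (t + 1) ω - pf (t + 1) ω * Z (t + 1) ω) with hdMdef
  set M : ℕ → Ω → ℝ := fun n ω => ∑ t ∈ Finset.range n, dM t ω with hMdef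
  have hcpos : ∀ t ω, 0 < K / ((p + K * ∑ i ∈ Finset.Icc 1 t, Z i ω) + K) :=
    fun t ω => div_pos hK (by have := hD0 t ω; linarith)
  have hcle : ∀ t ω, K / ((p + K * ∑ i ∈ Finset.Icc 1 t, Z i ω) + K) ≤ K / p := by
    intro t ω
    apply div_le_div_of_nonneg_left hK.le hp0
    have := hS0 t ω
    nlinarith
  have hgbd : ∀ t ω, |W (t + 1) ω - pf (t + 1) ω * Z (t + 1) ω| ≤ 2 := by
    intro t ω
    have h1 := hW0 (t+1) ω; have h2 := hWle (t+1) ω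
    have h3 := hZ0 (t+1) ω; have h4 := hZle (t+1) ω
    have h5 := (hp01 (t+1) ω).1; have h6 := (hp01 (t+1) ω).2
    rw [abs_le]
    constructor <;> nlinarith
  have hdMbd : ∀ t ω, |dM t ω| ≤ K / p * 2 := by
    intro t ω
    simp only [hdMdef]
    rw [abs_mul]
    apply mul_le_mul _ (hgbd t ω) (abs_nonneg _) (by positivity)
    rw [abs_of_pos (hcpos t ω)]
    exact hcle t ω
  have hcm : ∀ t, Measurable[ℱ t]
      fun ω => K / ((p + K * ∑ i ∈ Finset.Icc 1 t, Z i ω) + K) := by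
    intro t
    exact measurable_const.div ((((hSm t).const_mul K).const_add p).add_const K)
  have hgm : ∀ t, Measurable[ℱ (t + 1)]
      fun ω => W (t + 1) ω - pf (t + 1) ω * Z (t + 1) ω := by
    intro t
    exact (hWadapt (t+1)).sub
      (((hpadapt t).mono (ℱ.mono t.le_succ) le_rfl).mul (hZadapt (t+1)))
  have hdMm : ∀ t, Measurable[ℱ (t + 1)] (dM t) := by
    intro t
    simp only [hdMdef]
    exact ((hcm t).mono (ℱ.mono t.le_succ) le_rfl).mul (hgm t)
  have hMm : ∀ n, Measurable[ℱ n] (M n) := by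
    intro n
    simp only [hMdef]
    exact Finset.measurable_sum _ fun t ht =>
      (hdMm t).mono (ℱ.mono (Finset.mem_range.1 ht)) le_rfl
  have hdMint : ∀ t, Integrable (dM t) μ := fun t =>
    hbint _ _ ((hdMm t).mono (ℱ.le _) le_rfl) (hdMbd t)
  have hMbd : ∀ n ω, |M n ω| ≤ n * (K / p * 2) := by
    intro n ω
    simp only [hMdef]
    calc |∑ t ∈ Finset.range n, dM t ω| ≤ ∑ t ∈ Finset.range n, |dM t ω| :=
          Finset.abs_sum_le_sum_abs _ _
      _ ≤ ∑ t ∈ Finset.range n, (K / p * 2) := Finset.sum_le_sum fun t _ => hdMbd t ω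
      _ = n * (K / p * 2) := by simp [mul_comm]
  have hMint : ∀ n, Integrable (M n) μ := fun n =>
    hbint _ _ ((hMm n).mono (ℱ.le _) le_rfl) (hMbd n)
  have hdM0 : ∀ t, (μ[dM t | ℱ t]) =ᵐ[μ] 0 := by
    intro t
    have hgint : Integrable (fun ω => W (t + 1) ω - pf (t + 1) ω * Z (t + 1) ω) μ :=
      hbint _ 2 ((hgm t).mono (ℱ.le _) le_rfl) (hgbd t)
    have hpull := condExp_stronglyMeasurable_mul_of_bound (ℱ.le t)
      (hcm t).stronglyMeasurable hgint (K / p)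
      (ae_of_all _ fun ω => by
        rw [Real.norm_eq_abs, abs_of_pos (hcpos t ω)]
        exact hcle t ω)
    have hZint : Integrable (Z (t + 1)) μ :=
      hbint _ 1 ((hZadapt (t+1)).mono (ℱ.le _) le_rfl)
        (fun ω => by rw [abs_of_nonneg (hZ0 (t+1) ω)]; exact hZle (t+1) ω)
    have hWint : Integrable (W (t + 1)) μ :=
      hbint _ 1 ((hWadapt (t+1)).mono (ℱ.le _) le_rfl)
        (fun ω => by rw [abs_of_nonneg (hW0 (t+1) ω)]; exact hWle (t+1) ω)
    have hpZint : Integrable (fun ω => pf (t + 1) ω * Z (t + 1) ω) μ :=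
      hbint _ 1 (((hpadapt t).mono (ℱ.le _) le_rfl).mul
        ((hZadapt (t+1)).mono (ℱ.le _) le_rfl))
        (fun ω => by
          rw [abs_mul, abs_of_nonneg ((hp01 (t+1) ω).1), abs_of_nonneg (hZ0 (t+1) ω)]
          exact mul_le_one₀ (hp01 (t+1) ω).2 (hZ0 (t+1) ω) (hZle (t+1) ω))
    have hgeq : (fun ω => W (t + 1) ω - pf (t + 1) ω * Z (t + 1) ω)
        = W (t + 1) - pf (t + 1) * Z (t + 1) := rfl
    have hsub : (μ[W (t + 1) - pf (t + 1) * Z (t + 1) | ℱ t]) =ᵐ[μ]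
        (μ[W (t + 1) | ℱ t]) - μ[pf (t + 1) * Z (t + 1) | ℱ t] :=
      condExp_sub hWint hpZint (ℱ t)
    have hpull2 := condExp_stronglyMeasurable_mul_of_bound (ℱ.le t)
      (hpadapt t).stronglyMeasurable hZint 1
      (ae_of_all _ fun ω => by
        rw [Real.norm_eq_abs, abs_of_nonneg ((hp01 (t+1) ω).1)]
        exact (hp01 (t+1) ω).2)
    have hgz : (μ[fun ω => W (t + 1) ω - pf (t + 1) ω * Z (t + 1) ω | ℱ t]) =ᵐ[μ] 0 := by
      rw [hgeq]
      filter_upwards [hsub, hpull2, hZcond t, hWcond t] with ω h1 h2 h3 h4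
      simp only [Pi.zero_apply]
      rw [h1, Pi.sub_apply, h4, h2, Pi.mul_apply, h3]
      ring
    have hdMeq : dM t = (fun ω => K / ((p + K * ∑ i ∈ Finset.Icc 1 t, Z i ω) + K)) *
        fun ω => W (t + 1) ω - pf (t + 1) ω * Z (t + 1) ω := rfl
    rw [hdMeq]
    refine hpull.trans ?_
    filter_upwards [hgz] with ω h
    simp only [Pi.zero_apply] at h ⊢
    rw [Pi.mul_apply, h, mul_zero]
  have hMmart : Martingale M ℱ μ := by
    refine martingale_nat (fun n => (hMm n).stronglyMeasurable) hMint fun n => ?_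
    have hsucc : M (n + 1) = M n + dM n := by
      funext ω
      simp [hMdef, Finset.sum_range_succ]
    rw [hsucc]
    have hadd := condExp_add (m := ℱ n) (hMint n) (hdMint n)
    have hself : (μ[M n | ℱ n]) = M n :=
      condExp_of_stronglyMeasurable (ℱ.le n) (hMm n).stronglyMeasurable (hMint n)
    filter_upwards [hadd, hdM0 n] with ω h1 h2
    rw [h1, Pi.add_apply, hself, h2, Pi.zero_apply, add_zero]
  -- Step C : L¹ boundedness via the quadratic variation bound
  have hWpfZ_sq : ∀ t ω, (W (t + 1) ω - pf (t + 1) ω * Z (t + 1) ω) ^ 2 ≤ Z (t + 1) ω := by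
    intro t ω
    rcases hZ01 (t + 1) ω with h | h
    · have hw0 : W (t + 1) ω = 0 :=
        le_antisymm (le_trans (hWZ (t + 1) ω) h.le) (hW0 (t + 1) ω)
      simp [h, hw0]
    · rw [h]
      have h5 := (hp01 (t+1) ω).1; have h6 := (hp01 (t+1) ω).2
      have h1 := hW0 (t+1) ω; have h2 := hWle (t+1) ω
      nlinarith
  have hdMsq : ∀ t ω, (dM t ω) ^ 2 ≤
      K * (1 / (p + K * ∑ i ∈ Finset.Icc 1 t, Z i ω)
        - 1 / (p + K * ∑ i ∈ Finset.Icc 1 (t + 1), Z i ω)) := by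
    intro t ω
    have hz0 := hZ0 (t+1) ω
    have hz1 := hZle (t+1) ω
    have hApos := hD0 t ω
    set A := p + K * ∑ i ∈ Finset.Icc 1 t, Z i ω with hAdef
    have hBA : p + K * ∑ i ∈ Finset.Icc 1 (t + 1), Z i ω = A + K * Z (t + 1) ω := by
      rw [hIcc Z t ω]; ring
    have hAK : 0 < A + K := by linarith
    have hB : 0 < A + K * Z (t + 1) ω := by nlinarith
    rw [hBA]
    have step1 : (dM t ω) ^ 2 ≤ (K / (A + K)) ^ 2 * Z (t + 1) ω := by
      have : (dM t ω) ^ 2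
          = (K / (A + K)) ^ 2 * (W (t + 1) ω - pf (t + 1) ω * Z (t + 1) ω) ^ 2 := by
        simp only [hdMdef]
        ring
      rw [this]
      exact mul_le_mul_of_nonneg_left (hWpfZ_sq t ω) (by positivity)
    have e1 : K * (1 / A - 1 / (A + K * Z (t + 1) ω))
        = K ^ 2 * Z (t + 1) ω / (A * (A + K * Z (t + 1) ω)) := by
      field_simp
      ring
    have e2 : (K / (A + K)) ^ 2 * Z (t + 1) ω = K ^ 2 * Z (t + 1) ω / (A + K) ^ 2 := by
      rw [div_pow]; ring
    have step2 : K ^ 2 * Z (t + 1) ω / (A + K) ^ 2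
        ≤ K ^ 2 * Z (t + 1) ω / (A * (A + K * Z (t + 1) ω)) := by
      apply div_le_div_of_nonneg_left (by positivity) (by positivity)
      nlinarith [mul_le_mul_of_nonneg_left hz1 (mul_pos hApos hK).le, sq_nonneg K,
        mul_pos hApos hK]
    rw [e1]
    calc (dM t ω) ^ 2 ≤ (K / (A + K)) ^ 2 * Z (t + 1) ω := step1
      _ = K ^ 2 * Z (t + 1) ω / (A + K) ^ 2 := e2
      _ ≤ K ^ 2 * Z (t + 1) ω / (A * (A + K * Z (t + 1) ω)) := step2
  have hQV : ∀ n ω, ∑ t ∈ Finset.range n, (dM t ω) ^ 2 ≤ K / p := by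
    intro n ω
    have h1 : ∑ t ∈ Finset.range n, (dM t ω) ^ 2
        ≤ ∑ t ∈ Finset.range n, K * (1 / (p + K * ∑ i ∈ Finset.Icc 1 t, Z i ω)
          - 1 / (p + K * ∑ i ∈ Finset.Icc 1 (t + 1), Z i ω)) :=
      Finset.sum_le_sum fun t _ => hdMsq t ω
    rw [← Finset.mul_sum,
      Finset.sum_range_sub' (fun t => 1 / (p + K * ∑ i ∈ Finset.Icc 1 t, Z i ω)) n] at h1
    have hD0' : p + K * ∑ i ∈ Finset.Icc 1 0, Z i ω = p := by simp
    rw [hD0'] at h1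
    have hinv : 0 ≤ 1 / (p + K * ∑ i ∈ Finset.Icc 1 n, Z i ω) := by
      have := hD0 n ω; positivity
    calc ∑ t ∈ Finset.range n, (dM t ω) ^ 2
        ≤ K * (1 / p - 1 / (p + K * ∑ i ∈ Finset.Icc 1 n, Z i ω)) := h1
      _ ≤ K * (1 / p) := by nlinarith
      _ = K / p := by ring
  have hdMsqint : ∀ t, Integrable (fun ω => (dM t ω) ^ 2) μ := by
    intro t
    refine hbint _ ((K / p * 2) ^ 2) (((hdMm t).mono (ℱ.le _) le_rfl).pow_const 2) fun ω => ?_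
    rw [abs_of_nonneg (sq_nonneg _), ← sq_abs]
    exact pow_le_pow_left₀ (abs_nonneg _) (hdMbd t ω) 2
  have hMsqint : ∀ n, Integrable (fun ω => (M n ω) ^ 2) μ := by
    intro n
    refine hbint _ ((n * (K / p * 2)) ^ 2) (((hMm n).mono (ℱ.le _) le_rfl).pow_const 2) fun ω => ?_
    rw [abs_of_nonneg (sq_nonneg _), ← sq_abs]
    exact pow_le_pow_left₀ (abs_nonneg _) (hMbd n ω) 2
  have hprodint : ∀ n, Integrable (fun ω => M n ω * dM n ω) μ := by
    intro n
    refine hbint _ ((n * (K / p * 2)) * (K / p * 2))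
      (((hMm n).mono (ℱ.le _) le_rfl).mul ((hdMm n).mono (ℱ.le _) le_rfl)) fun ω => ?_
    rw [abs_mul]
    exact mul_le_mul (hMbd n ω) (hdMbd n ω) (abs_nonneg _) (by positivity)
  have hcross : ∀ n, ∫ ω, M n ω * dM n ω ∂μ = 0 := by
    intro n
    have hpull := condExp_stronglyMeasurable_mul_of_bound (ℱ.le n)
      (hMm n).stronglyMeasurable (hdMint n) ((n : ℝ) * (K / p * 2))
      (ae_of_all _ fun ω => by rw [Real.norm_eq_abs]; exact hMbd n ω)
    have hzero : (μ[M n * dM n | ℱ n]) =ᵐ[μ] 0 := by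
      refine hpull.trans ?_
      filter_upwards [hdM0 n] with ω h
      simp only [Pi.zero_apply] at h ⊢
      rw [Pi.mul_apply, h, mul_zero]
    calc ∫ ω, M n ω * dM n ω ∂μ = ∫ ω, (μ[M n * dM n | ℱ n]) ω ∂μ :=
          (integral_condExp (ℱ.le n)).symm
      _ = ∫ ω, (0 : Ω → ℝ) ω ∂μ := integral_congr_ae hzero
      _ = 0 := by simp
  have hMsq_eq : ∀ n, ∫ ω, (M n ω) ^ 2 ∂μ = ∑ t ∈ Finset.range n, ∫ ω, (dM t ω) ^ 2 ∂μ := by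
    intro n
    induction n with
    | zero => simp [hMdef]
    | succ n ih =>
      have hexp : ∀ ω, (M (n + 1) ω) ^ 2
          = (M n ω) ^ 2 + (2 * (M n ω * dM n ω) + (dM n ω) ^ 2) := by
        intro ω
        simp only [hMdef, Finset.sum_range_succ]
        ring
      calc ∫ ω, (M (n + 1) ω) ^ 2 ∂μ
          = ∫ ω, ((M n ω) ^ 2 + (2 * (M n ω * dM n ω) + (dM n ω) ^ 2)) ∂μ :=
            integral_congr_ae (ae_of_all _ hexp)
        _ = (∫ ω, (M n ω) ^ 2 ∂μ)
            + ∫ ω, (2 * (M n ω * dM n ω) + (dM n ω) ^ 2) ∂μ :=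
            integral_add (hMsqint n) (((hprodint n).const_mul 2).add (hdMsqint n))
        _ = (∫ ω, (M n ω) ^ 2 ∂μ)
            + (2 * (∫ ω, M n ω * dM n ω ∂μ) + ∫ ω, (dM n ω) ^ 2 ∂μ) := by
            rw [integral_add ((hprodint n).const_mul 2) (hdMsqint n), integral_const_mul]
        _ = ∑ t ∈ Finset.range (n + 1), ∫ ω, (dM t ω) ^ 2 ∂μ := by
            rw [ih, hcross n, Finset.sum_range_succ]
            ring
  have hM2 : ∀ n, ∫ ω, (M n ω) ^ 2 ∂μ ≤ K / p := by
    intro n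
    rw [hMsq_eq n, ← integral_finset_sum _ fun t _ => hdMsqint t]
    calc ∫ ω, ∑ t ∈ Finset.range n, (dM t ω) ^ 2 ∂μ
        ≤ ∫ (_ : Ω), K / p ∂μ :=
          integral_mono (integrable_finset_sum _ fun t _ => hdMsqint t)
            (integrable_const _) (fun ω => hQV n ω)
      _ = K / p := by simp
  have hL1 : ∀ n, eLpNorm (M n) 1 μ ≤ ENNReal.ofReal (1 + K / p) := by
    intro n
    rw [eLpNorm_one_eq_lintegral_enorm, ← ofReal_integral_norm_eq_lintegral_enorm (hMint n)]
    apply ENNReal.ofReal_le_ofReal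
    have i1 : Integrable (fun ω => 1 + (M n ω) ^ 2) μ :=
      (integrable_const 1).add (hMsqint n)
    calc ∫ ω, ‖M n ω‖ ∂μ ≤ ∫ ω, (1 + (M n ω) ^ 2) ∂μ :=
          integral_mono (hMint n).norm i1
            (fun ω => by rw [Real.norm_eq_abs]; exact abs_le_one_add_sq _)
      _ = 1 + ∫ ω, (M n ω) ^ 2 ∂μ := by
          rw [integral_add (integrable_const 1) (hMsqint n)]
          simp
      _ ≤ 1 + K / p := by linarith [hM2 n]
  have hMconv : ∀ᵐ ω ∂μ, ∃ c, Tendsto (fun n => M n ω) atTop (nhds c) :=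
    hMmart.submartingale.exists_ae_tendsto_of_bdd (R := (1 + K / p).toNNReal) hL1
  -- Step D : the pathwise recursion and conclusion
  have hrec : ∀ ω t, (q + K * ∑ i ∈ Finset.Icc 1 (t + 1), W i ω)
        / (p + K * ∑ i ∈ Finset.Icc 1 (t + 1), Z i ω)
      = (q + K * ∑ i ∈ Finset.Icc 1 t, W i ω) / (p + K * ∑ i ∈ Finset.Icc 1 t, Z i ω)
        + (1 - (p + K * ∑ i ∈ Finset.Icc 1 t, Z i ω)
            / (p + K * ∑ i ∈ Finset.Icc 1 (t + 1), Z i ω))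
          * (pf (t + 1) ω
            - (q + K * ∑ i ∈ Finset.Icc 1 t, W i ω) / (p + K * ∑ i ∈ Finset.Icc 1 t, Z i ω))
        + (M (t + 1) ω - M t ω) := by
    intro ω t
    have hMd : M (t + 1) ω - M t ω = dM t ω := by
      simp [hMdef, Finset.sum_range_succ]
    rw [hMd, hIcc Z t ω, hIcc W t ω]
    have hdm2 : dM t ω = K * (W (t + 1) ω - pf (t + 1) ω * Z (t + 1) ω)
        / (p + K * (∑ i ∈ Finset.Icc 1 t, Z i ω + Z (t + 1) ω)) := by
      rcases hZ01 (t + 1) ω with h | h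
      · have hw0 : W (t + 1) ω = 0 :=
          le_antisymm (le_trans (hWZ (t + 1) ω) h.le) (hW0 (t + 1) ω)
        simp [hdMdef, h, hw0]
      · simp only [hdMdef, h]
        have hden : p + K * (∑ i ∈ Finset.Icc 1 t, Z i ω + 1)
            = (p + K * ∑ i ∈ Finset.Icc 1 t, Z i ω) + K := by ring
        rw [hden, mul_comm (K / _), mul_div_assoc']
        ring
    rw [hdm2]
    have hA := hD0 t ω
    have hB : 0 < p + K * (∑ i ∈ Finset.Icc 1 t, Z i ω + Z (t + 1) ω) := by
      have := hD0 (t + 1) ω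
      rwa [hIcc Z t ω] at this
    exact adaSub_algebra q p K _ _ _ _ _ hA hB
  filter_upwards [hDtop, hMconv, hptend] with ω h1 h2 h3
  exact adaSub_det_tendsto
    (fun t => (q + K * ∑ i ∈ Finset.Icc 1 t, W i ω) / (p + K * ∑ i ∈ Finset.Icc 1 t, Z i ω))
    (fun t => pf t ω) (fun n => M n ω)
    (fun t => p + K * ∑ i ∈ Finset.Icc 1 t, Z i ω) (pstar ω)
    (fun t => hD0 t ω) (fun t => hDmono t ω) h1 (fun t => hrec ω t) h2 h3
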